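/- Let ᾱ be a real number with 0 < ᾱ < π/2 and let θ be a real number with 0 ≤ θ ≤ π. Define f : ℝ → ℝ by f(x) = −exp(cot(ᾱ)·(x+θ)) + (cos(θ+ᾱ)/cos(ᾱ))·(exp(cot(ᾱ)·x) − 1). Then for every real x, f is twice differentiable at x, its second derivative equals −(cot(ᾱ)/sin(ᾱ))·exp(cot(ᾱ)·(x+θ))·(cos(ᾱ) − cos(ᾱ+θ)·exp(−cot(ᾱ)·θ)), and this second derivative is ≤ 0; in particular f is concave on ℝ. -/

import Mathlib

open Real

theorem stmt1 (α θ : ℝ) (hα0 : 0 < α) (hα1 : α < π / 2)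
    (hθ0 : 0 ≤ θ) (hθ1 : θ ≤ π) :
    let f : ℝ → ℝ := fun x =>
      -Real.exp (Real.cot α * (x + θ)) +
        (Real.cos (θ + α) / Real.cos α) * (Real.exp (Real.cot α * x) - 1)
    (∀ x : ℝ, ContDiffAt ℝ 2 f x) ∧
    (∀ x : ℝ, deriv (deriv f) x =
      -(Real.cot α / Real.sin α) * Real.exp (Real.cot α * (x + θ)) *
        (Real.cos α - Real.cos (α + θ) * Real.exp (-Real.cot α * θ))) ∧
    (∀ x : ℝ, deriv (deriv f) x ≤ 0) ∧
    ConcaveOn ℝ Set.univ f := by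
  intro f
  set c := Real.cot α with hc
  set k := Real.cos (θ + α) / Real.cos α with hk
  have hsin : 0 < Real.sin α := Real.sin_pos_of_pos_of_lt_pi hα0 (lt_trans hα1 (by linarith [Real.pi_pos]))
  have hcos : 0 < Real.cos α := Real.cos_pos_of_mem_Ioo ⟨by linarith, hα1⟩
  have hcpos : 0 < c := by
    rw [hc, Real.cot_eq_cos_div_sin]; positivity
  have hd1 : ∀ x : ℝ, HasDerivAt f (-(c * Real.exp (c * (x + θ))) + k * (c * Real.exp (c * x))) x := by
    intro x
    have h1 : HasDerivAt (fun x : ℝ => Real.exp (c * (x + θ))) (c * Real.exp (c * (x + θ))) x := by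
      have := (((hasDerivAt_id x).add_const θ).const_mul c).exp
      simpa [mul_comm] using this
    have h2 : HasDerivAt (fun x : ℝ => Real.exp (c * x)) (c * Real.exp (c * x)) x := by
      have := ((hasDerivAt_id x).const_mul c).exp
      simpa [mul_comm] using this
    exact h1.neg.add (((h2.sub_const 1).const_mul k))
  have hdf : deriv f = fun x => -(c * Real.exp (c * (x + θ))) + k * (c * Real.exp (c * x)) :=
    funext fun x => (hd1 x).deriv
  have hd2 : ∀ x : ℝ, HasDerivAt (deriv f)
      (-(c * (c * Real.exp (c * (x + θ)))) + k * (c * (c * Real.exp (c * x)))) x := by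
    intro x
    rw [hdf]
    have h1 : HasDerivAt (fun x : ℝ => Real.exp (c * (x + θ))) (c * Real.exp (c * (x + θ))) x := by
      have := (((hasDerivAt_id x).add_const θ).const_mul c).exp
      simpa [mul_comm] using this
    have h2 : HasDerivAt (fun x : ℝ => Real.exp (c * x)) (c * Real.exp (c * x)) x := by
      have := ((hasDerivAt_id x).const_mul c).exp
      simpa [mul_comm] using this
    have := (h1.const_mul c).neg.add ((h2.const_mul c).const_mul k)
    exact this
  have hdf2 : ∀ x : ℝ, deriv (deriv f) x =
      -(c * (c * Real.exp (c * (x + θ)))) + k * (c * (c * Real.exp (c * x)))  :=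
    fun x => (hd2 x).deriv
  have key : ∀ x : ℝ, deriv (deriv f) x =
      -(c / Real.sin α) * Real.exp (c * (x + θ)) *
        (Real.cos α - Real.cos (α + θ) * Real.exp (-c * θ)) := by
    intro x
    rw [hdf2 x, hk, hc, Real.cot_eq_cos_div_sin]
    rw [mul_add, Real.exp_add, add_comm θ α,
      show -(Real.cos α / Real.sin α) * θ = -(Real.cos α / Real.sin α * θ) from by ring,
      Real.exp_neg]
    have he : Real.exp (Real.cos α / Real.sin α * θ) ≠ 0 := Real.exp_ne_zero _
    field_simp
    ring
  refine ⟨?_, key, ?_, ?_⟩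
  · intro x
    have : ContDiff ℝ 2 f := by
      apply ContDiff.add
      · exact (Real.contDiff_exp.comp (contDiff_const.mul (contDiff_id.add contDiff_const))).neg
      · exact contDiff_const.mul ((Real.contDiff_exp.comp (contDiff_const.mul contDiff_id)).sub contDiff_const)
    exact this.contDiffAt
  · intro x
    rw [key x]
    have hb : Real.cos (α + θ) * Real.exp (-c * θ) ≤ Real.cos α := by
      rcases le_or_gt (Real.cos (α + θ)) 0 with h | h
      · calc Real.cos (α + θ) * Real.exp (-c * θ) ≤ 0 :=
              mul_nonpos_of_nonpos_of_nonneg h (Real.exp_pos _).le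
          _ ≤ Real.cos α := hcos.le
      · have hle : α + θ ≤ π := by
          by_contra hgt
          push_neg at hgt
          have : Real.cos (α + θ) ≤ 0 :=
            Real.cos_nonpos_of_pi_div_two_le_of_le (by linarith) (by linarith)
          linarith
        have h1 : Real.cos (α + θ) ≤ Real.cos α :=
          Real.cos_le_cos_of_nonneg_of_le_pi hα0.le hle (by linarith)
        have h2 : Real.exp (-c * θ) ≤ 1 := by
          rw [Real.exp_le_one_iff]
          nlinarith
        nlinarith [Real.exp_pos (-c * θ)]
    have := Real.exp_pos (c * (x + θ))
    have : 0 ≤ (c / Real.sin α) * Real.exp (c * (x + θ)) *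
        (Real.cos α - Real.cos (α + θ) * Real.exp (-c * θ)) :=
      mul_nonneg (mul_nonneg (div_nonneg hcpos.le hsin.le) (Real.exp_pos _).le) (by linarith)
    nlinarith
  · apply concaveOn_univ_of_deriv2_nonpos
    · exact fun x => (hd1 x).differentiableAt
    · exact fun x => (hd2 x).differentiableAt
    · intro x
      simp only [Function.iterate_succ, Function.iterate_zero, Function.comp_apply, id]
      rw [key x]
      have hb : Real.cos (α + θ) * Real.exp (-c * θ) ≤ Real.cos α := by
        rcases le_or_gt (Real.cos (α + θ)) 0 with h | h
        · calc Real.cos (α + θ) * Real.exp (-c * θ) ≤ 0 :=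
                mul_nonpos_of_nonpos_of_nonneg h (Real.exp_pos _).le
            _ ≤ Real.cos α := hcos.le
        · have hle : α + θ ≤ π := by
            by_contra hgt
            push_neg at hgt
            have : Real.cos (α + θ) ≤ 0 :=
              Real.cos_nonpos_of_pi_div_two_le_of_le (by linarith) (by linarith)
            linarith
          have h1 : Real.cos (α + θ) ≤ Real.cos α :=
            Real.cos_le_cos_of_nonneg_of_le_pi hα0.le hle (by linarith)
          have h2 : Real.exp (-c * θ) ≤ 1 := by
            rw [Real.exp_le_one_iff]
            nlinarith
          nlinarith [Real.exp_pos (-c * θ)]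
      have : 0 ≤ (c / Real.sin α) * Real.exp (c * (x + θ)) *
          (Real.cos α - Real.cos (α + θ) * Real.exp (-c * θ)) :=
        mul_nonneg (mul_nonneg (div_nonneg hcpos.le hsin.le) (Real.exp_pos _).le) (by linarith)
      nlinarith
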